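/- For the Gaussian-kernel approximation problem under the normalized error criterion, the problem is strongly polynomially tractable if and only if r(γ) := liminf_{k→∞} ln(γ_k^{-2})/ln k > 0, and in that case the exponent of SPT is 2/r(γ). -/

import Mathlib

open Filter Real Set

/-- Information complexity: the number of multi-indices `(j₁,…,j_d) ∈ ℕ^d`
(here 0-indexed, so `Λ k j` stands for `λ(k+1, j+1)`) whose eigenvalue product exceeds `ε²`. -/
noncomputable def infoCount (Λ : ℕ → ℕ → ℝ) (d : ℕ) (ε : ℝ) : ℕ :=
  Nat.card {j : Fin d → ℕ | ε ^ 2 < ∏ k : Fin d, Λ k.val (j k)}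

/-- Strong polynomial tractability. -/
def IsSPT (Λ : ℕ → ℕ → ℝ) : Prop :=
  ∃ C p : ℝ, 0 ≤ C ∧ 0 ≤ p ∧ ∀ d : ℕ, 1 ≤ d → ∀ ε : ℝ, ε ∈ Set.Ioo (0 : ℝ) 1 →
    (infoCount Λ d ε : ℝ) ≤ C * ε ^ (-p)

/-- The exponent `p*` of strong polynomial tractability. -/
noncomputable def sptExponent (Λ : ℕ → ℕ → ℝ) : ℝ :=
  sInf {p : ℝ | 0 ≤ p ∧ ∃ C : ℝ, 0 ≤ C ∧ ∀ d : ℕ, 1 ≤ d → ∀ ε : ℝ, ε ∈ Set.Ioo (0 : ℝ) 1 →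
    (infoCount Λ d ε : ℝ) ≤ C * ε ^ (-p)}

/-- Polynomial tractability. -/
def IsPT (Λ : ℕ → ℕ → ℝ) : Prop :=
  ∃ C p q : ℝ, 0 ≤ C ∧ 0 ≤ p ∧ 0 ≤ q ∧ ∀ d : ℕ, 1 ≤ d → ∀ ε : ℝ, ε ∈ Set.Ioo (0 : ℝ) 1 →
    (infoCount Λ d ε : ℝ) ≤ C * (d : ℝ) ^ q * ε ^ (-p)

/-- Quasi-polynomial tractability. -/
def IsQPT (Λ : ℕ → ℕ → ℝ) : Prop :=
  ∃ C t : ℝ, 0 < C ∧ 0 < t ∧ ∀ d : ℕ, 1 ≤ d → ∀ ε : ℝ, ε ∈ Set.Ioo (0 : ℝ) 1 →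
    (infoCount Λ d ε : ℝ) ≤ C * Real.exp (t * (1 + Real.log d) * (1 + Real.log ε⁻¹))

/-- The exponent `t*` of quasi-polynomial tractability. -/
noncomputable def qptExponent (Λ : ℕ → ℕ → ℝ) : ℝ :=
  sInf {t : ℝ | 0 < t ∧ ∃ C : ℝ, 0 < C ∧ ∀ d : ℕ, 1 ≤ d → ∀ ε : ℝ, ε ∈ Set.Ioo (0 : ℝ) 1 →
    (infoCount Λ d ε : ℝ) ≤ C * Real.exp (t * (1 + Real.log d) * (1 + Real.log ε⁻¹))}

/-- The filter describing `ε⁻¹ + d → ∞` over pairs `(ε, d)` with `ε ∈ (0,1)` and `d ≥ 1`. -/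
noncomputable def wtFilter : Filter (ℝ × ℕ) :=
  (Filter.comap (fun p : ℝ × ℕ => p.1⁻¹ + (p.2 : ℝ)) Filter.atTop) ⊓
    Filter.principal {p : ℝ × ℕ | p.1 ∈ Set.Ioo (0 : ℝ) 1 ∧ 1 ≤ p.2}

/-- `(s,t)`-weak tractability: `ln n(ε,d) / (ε^{-s} + d^t) → 0` as `ε⁻¹ + d → ∞`. -/
def IsWT (Λ : ℕ → ℕ → ℝ) (s t : ℝ) : Prop :=
  Filter.Tendsto
    (fun p : ℝ × ℕ => Real.log (infoCount Λ p.2 p.1) / (p.1 ^ (-s) + (p.2 : ℝ) ^ t))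
    wtFilter (nhds 0)

/-- Uniform weak tractability. -/
def IsUWT (Λ : ℕ → ℕ → ℝ) : Prop := ∀ s t : ℝ, 0 < s → 0 < t → IsWT Λ s t

/-- The problem suffers from the curse of dimensionality. -/
def SuffersCurse (Λ : ℕ → ℕ → ℝ) : Prop :=
  ∃ C ε₀ α : ℝ, 0 < C ∧ 0 < ε₀ ∧ 0 < α ∧ ∀ ε : ℝ, 0 < ε → ε ≤ ε₀ →
    {d : ℕ | C * (1 + α) ^ d ≤ (infoCount Λ d ε : ℝ)}.Infinite

/-- Condition (3) of Property (P) for a given `τ > 0`: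
`H(k,τ) = ∑_{j≥2} (λ(k,j)/λ(k,2))^τ` is finite for each `k` and
`sup_k H(k,τ) = H(1,τ)` (equivalently `H(k,τ) ≤ H(1,τ)` for all `k`). -/
def Cond3 (Λ : ℕ → ℕ → ℝ) (τ : ℝ) : Prop :=
  0 < τ ∧ (∀ k, Summable fun j : ℕ => (Λ k (j + 1) / Λ k 1) ^ τ) ∧
    ∀ k, (∑' j : ℕ, (Λ k (j + 1) / Λ k 1) ^ τ) ≤ ∑' j : ℕ, (Λ 0 (j + 1) / Λ 0 1) ^ τ

/-- `τ₀`: the infimum of all `τ` satisfying Condition (3). -/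
noncomputable def tau0 (Λ : ℕ → ℕ → ℝ) : ℝ := sInf {τ : ℝ | Cond3 Λ τ}

/-- Property (P): each sequence `λ(k,·)` is nonincreasing and nonnegative with `λ(k,1) = 1`
and `λ(k,2) > 0`, `h_k = λ(k,2)` is nonincreasing, and Condition (3) holds for some `τ > 0`. -/
structure PropertyP (Λ : ℕ → ℕ → ℝ) : Prop where
  nonneg : ∀ k j, 0 ≤ Λ k j
  anti : ∀ k, Antitone (Λ k)
  first : ∀ k, Λ k 0 = 1
  second_pos : ∀ k, 0 < Λ k 1
  h_anti : Antitone fun k => Λ k 1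
  cond3 : ∃ τ : ℝ, Cond3 Λ τ


/-- `ω_γ = 2γ²/(1+2γ²+√(1+4γ²))`, as a function of `c = γ²`. -/
noncomputable def omegaOf (c : ℝ) : ℝ := 2 * c / (1 + 2 * c + Real.sqrt (1 + 4 * c))

/-- Normalized eigenvalues of the Gaussian-kernel problem:
`λ(k,j)/λ(k,1) = ω_{γ_k}^{j-1}` (0-indexed: `gaussLam γsq k j = ω_{γ_{k+1}}^j`,
where `γsq k = γ_{k+1}²`). -/
noncomputable def gaussLam (γsq : ℕ → ℝ) (k j : ℕ) : ℝ := omegaOf (γsq k) ^ j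

lemma gspt_sqrt_le (c : ℝ) (h : 0 ≤ c) : Real.sqrt (1 + 4*c) ≤ 1 + 2*c := by
  rw [show (1:ℝ)+4*c = (1+2*c)^2 - (2*c)^2 by ring]
  calc Real.sqrt ((1+2*c)^2 - (2*c)^2) ≤ Real.sqrt ((1+2*c)^2) := by
        apply Real.sqrt_le_sqrt; nlinarith
    _ = 1 + 2*c := by rw [Real.sqrt_sq (by linarith)]

lemma one_le_sqrt' (c : ℝ) (h : 0 ≤ c) : 1 ≤ Real.sqrt (1 + 4*c) := by
  nlinarith [Real.sq_sqrt (by linarith : (0:ℝ) ≤ 1+4*c), Real.sqrt_nonneg (1+4*c)]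

lemma gspt_denom_pos (c : ℝ) (h : 0 ≤ c) : 0 < 1 + 2*c + Real.sqrt (1+4*c) := by
  have := one_le_sqrt' c h; linarith

lemma omegaOf_nonneg (c : ℝ) (h : 0 ≤ c) : 0 ≤ omegaOf c :=
  div_nonneg (by linarith) (gspt_denom_pos c h).le

lemma omegaOf_pos (c : ℝ) (h : 0 < c) : 0 < omegaOf c :=
  div_pos (by linarith) (gspt_denom_pos c h.le)

lemma omegaOf_lt_one (c : ℝ) (h : 0 ≤ c) : omegaOf c < 1 := by
  rw [omegaOf, div_lt_one (gspt_denom_pos c h)]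
  have := one_le_sqrt' c h; linarith

lemma omegaOf_le_self (c : ℝ) (h : 0 ≤ c) : omegaOf c ≤ c := by
  rw [omegaOf, div_le_iff₀ (gspt_denom_pos c h)]
  have := one_le_sqrt' c h; nlinarith

lemma le_omegaOf (c : ℝ) (h : 0 ≤ c) : c / (1 + 2*c) ≤ omegaOf c := by
  rw [omegaOf, div_le_div_iff₀ (by linarith) (gspt_denom_pos c h)]
  have := gspt_sqrt_le c h; nlinarith

lemma omegaOf_mono {a b : ℝ} (ha : 0 ≤ a) (hab : a ≤ b) : omegaOf a ≤ omegaOf b := by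
  have hb : 0 ≤ b := ha.trans hab
  have h1 := one_le_sqrt' a ha
  have h2 := one_le_sqrt' b hb
  have hs : Real.sqrt (1+4*a) ≤ Real.sqrt (1+4*b) := Real.sqrt_le_sqrt (by linarith)
  have ha2 : Real.sqrt (1+4*a) ^ 2 = 1+4*a := Real.sq_sqrt (by linarith)
  have hb2 : Real.sqrt (1+4*b) ^ 2 = 1+4*b := Real.sq_sqrt (by linarith)
  rw [omegaOf, omegaOf, div_le_div_iff₀ (gspt_denom_pos a ha) (gspt_denom_pos b hb)]
  have hprod : 1 ≤ Real.sqrt (1+4*a) * Real.sqrt (1+4*b) := by nlinarith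
  nlinarith [mul_nonneg (sub_nonneg.2 hs) (by linarith : (0:ℝ) ≤ Real.sqrt (1+4*a) * Real.sqrt (1+4*b) - 1)]

section
variable {γsq : ℕ → ℝ}

lemma omega_anti (hpos : ∀ k, 0 < γsq k) (hanti : Antitone γsq) :
    Antitone fun k => omegaOf (γsq k) := fun a b hab =>
  omegaOf_mono (hpos b).le (hanti hab)

lemma setA_subset (hpos : ∀ k, 0 < γsq k) (hanti : Antitone γsq) (d : ℕ) {ε : ℝ} (hε : ε ∈ Set.Ioo (0:ℝ) 1) :
    ∃ N : ℕ, {j : Fin d → ℕ | ε ^ 2 < ∏ k : Fin d, gaussLam γsq k.val (j k)} ⊆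
      ↑(Fintype.piFinset fun _ : Fin d => Finset.range N) := by
  obtain ⟨hε0, hε1⟩ := hε
  have hsq : (0:ℝ) < ε ^ 2 := by positivity
  obtain ⟨N, hN⟩ := exists_pow_lt_of_lt_one hsq (omegaOf_lt_one _ (hpos 0).le)
  refine ⟨N, fun j hj => ?_⟩
  rw [Finset.mem_coe, Fintype.mem_piFinset]
  intro k
  rw [Finset.mem_range]
  simp only [Set.mem_setOf_eq, gaussLam] at hj
  -- product is at most the single factor at k
  have hfac : ∀ i : Fin d, omegaOf (γsq i.val) ^ (j i) ≤ 1 :=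
    fun i => pow_le_one₀ (omegaOf_nonneg _ (hpos _).le) (omegaOf_lt_one _ (hpos _).le).le
  have hprod : ∏ i : Fin d, omegaOf (γsq i.val) ^ (j i) ≤ omegaOf (γsq k.val) ^ (j k) := by
    rw [← Finset.mul_prod_erase Finset.univ _ (Finset.mem_univ k)]
    have h1 : ∏ i ∈ Finset.univ.erase k, omegaOf (γsq i.val) ^ (j i) ≤ 1 :=
      Finset.prod_le_one (fun i _ => pow_nonneg (omegaOf_nonneg _ (hpos _).le) _) (fun i _ => hfac i)
    nlinarith [pow_nonneg (omegaOf_nonneg _ (hpos k.val).le) (j k)]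
  have h2 : ε ^ 2 < omegaOf (γsq 0) ^ (j k) := by
    calc ε ^ 2 < omegaOf (γsq k.val) ^ (j k) := lt_of_lt_of_le hj hprod
    _ ≤ omegaOf (γsq 0) ^ (j k) :=
        pow_le_pow_left₀ (omegaOf_nonneg _ (hpos _).le)
          (omega_anti hpos hanti (Nat.zero_le _)) _
  by_contra hcon
  push_neg at hcon
  have : omegaOf (γsq 0) ^ (j k) ≤ omegaOf (γsq 0) ^ N :=
    pow_le_pow_of_le_one (omegaOf_nonneg _ (hpos _).le) (omegaOf_lt_one _ (hpos _).le).le hcon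
  linarith

lemma setA_finite (hpos : ∀ k, 0 < γsq k) (hanti : Antitone γsq) (d : ℕ) {ε : ℝ} (hε : ε ∈ Set.Ioo (0:ℝ) 1) :
    {j : Fin d → ℕ | ε ^ 2 < ∏ k : Fin d, gaussLam γsq k.val (j k)}.Finite := by
  obtain ⟨N, hN⟩ := setA_subset hpos hanti d hε
  exact Set.Finite.subset (Fintype.piFinset fun _ : Fin d => Finset.range N).finite_toSet hN

end

lemma pow_rpow_comm {a : ℝ} (ha : 0 ≤ a) (n : ℕ) (τ : ℝ) : (a ^ n) ^ τ = (a ^ τ) ^ n := by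
  rw [← Real.rpow_natCast a n, ← Real.rpow_mul ha, mul_comm, Real.rpow_mul ha,
    Real.rpow_natCast]

lemma geom_partial_le {x : ℝ} (h0 : 0 ≤ x) (h1 : x < 1) (n : ℕ) :
    ∑ i ∈ Finset.range n, x ^ i ≤ (1 - x)⁻¹ := by
  have h1x : (0:ℝ) < 1 - x := by linarith
  have hxn : 0 ≤ x ^ n := pow_nonneg h0 n
  rw [geom_sum_eq (by linarith : x ≠ 1) n,
    show (x ^ n - 1) / (x - 1) = (1 - x ^ n) / (1 - x) by
      rw [div_eq_div_iff (by linarith) (by linarith)]; ring]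
  rw [inv_eq_one_div]
  gcongr
  linarith

lemma inv_one_sub_le_exp {x b : ℝ} (h0 : 0 ≤ x) (hxb : x ≤ b) (hb : b < 1) :
    (1 - x)⁻¹ ≤ Real.exp (x / (1 - b)) := by
  have hx1 : x < 1 := lt_of_le_of_lt hxb hb
  have h1x : (0:ℝ) < 1 - x := by linarith
  have h1b : (0:ℝ) < 1 - b := by linarith
  have key : (1 - x)⁻¹ ≤ 1 + x / (1 - b) := by
    have e : (1 - x)⁻¹ = 1 + x / (1 - x) := by field_simp; ring
    rw [e]
    have : x / (1 - x) ≤ x / (1 - b) := by gcongr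
    linarith
  calc (1-x)⁻¹ ≤ 1 + x / (1-b) := key
    _ ≤ Real.exp (x / (1-b)) := by
        have := Real.add_one_le_exp (x / (1-b)); linarith

lemma infoCount_le (hpos : ∀ k, 0 < γsq k) (hanti : Antitone γsq) {τ : ℝ} (hτ : 0 < τ)
    (hsum : Summable fun k => omegaOf (γsq k) ^ τ) (d : ℕ) {ε : ℝ}
    (hε : ε ∈ Set.Ioo (0:ℝ) 1) :
    (infoCount (gaussLam γsq) d ε : ℝ) ≤
      Real.exp ((∑' k, omegaOf (γsq k) ^ τ) / (1 - omegaOf (γsq 0) ^ τ)) * ε ^ (-(2*τ)) := by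
  obtain ⟨hε0, hε1⟩ := hε
  set ω : ℕ → ℝ := fun k => omegaOf (γsq k) with hω
  have hω0 : ∀ k, 0 < ω k := fun k => omegaOf_pos _ (hpos k)
  have hω1 : ∀ k, ω k < 1 := fun k => omegaOf_lt_one _ (hpos k).le
  set x : ℕ → ℝ := fun k => ω k ^ τ with hxdef
  have hx0 : ∀ k, 0 ≤ x k := fun k => Real.rpow_nonneg (hω0 k).le τ
  have hx1 : ∀ k, x k < 1 := fun k => Real.rpow_lt_one (hω0 k).le (hω1 k) hτ
  have hxb : ∀ k, x k ≤ x 0 := fun k =>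
    Real.rpow_le_rpow (hω0 k).le (omega_anti hpos hanti (Nat.zero_le k)) hτ.le
  have hfin := setA_finite hpos hanti d ⟨hε0, hε1⟩
  obtain ⟨N, hsub⟩ := setA_subset hpos hanti d ⟨hε0, hε1⟩
  set F := hfin.toFinset with hF
  have hFsub : F ⊆ Fintype.piFinset fun _ : Fin d => Finset.range N := by
    intro j hj
    exact hsub (hfin.mem_toFinset.1 hj)
  have hcard : (infoCount (gaussLam γsq) d ε : ℝ) = (F.card : ℝ) := by
    rw [infoCount, Nat.card_coe_set_eq, Set.ncard_eq_toFinset_card _ hfin]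
  set E : ℝ := (ε ^ 2) ^ τ with hEdef
  have hE : 0 < E := Real.rpow_pos_of_pos (by positivity) τ
  set M : ℝ := (∑' k, ω k ^ τ) / (1 - x 0) with hM
  have key : (F.card : ℝ) * E ≤ Real.exp M := by
    calc (F.card : ℝ) * E = ∑ _j ∈ F, E := by rw [Finset.sum_const, nsmul_eq_mul]
      _ ≤ ∑ j ∈ F, ∏ k : Fin d, x k.val ^ (j k) := by
          apply Finset.sum_le_sum
          intro j hj
          have hj' : ε ^ 2 < ∏ k : Fin d, gaussLam γsq k.val (j k) := hfin.mem_toFinset.1 hj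
          have h1 : E ≤ (∏ k : Fin d, gaussLam γsq k.val (j k)) ^ τ :=
            Real.rpow_le_rpow (by positivity) hj'.le hτ.le
          have h2 : (∏ k : Fin d, gaussLam γsq k.val (j k)) ^ τ
              = ∏ k : Fin d, x k.val ^ (j k) := by
            rw [← Real.finset_prod_rpow Finset.univ _
              (fun i _ => pow_nonneg (hω0 i.val).le _) τ]
            exact Finset.prod_congr rfl fun i _ => pow_rpow_comm (hω0 i.val).le _ τ
          rw [← h2]; exact h1
      _ ≤ ∑ j ∈ Fintype.piFinset (fun _ : Fin d => Finset.range N),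
            ∏ k : Fin d, x k.val ^ (j k) :=
          Finset.sum_le_sum_of_subset_of_nonneg hFsub
            (fun j _ _ => Finset.prod_nonneg fun k _ => pow_nonneg (hx0 _) _)
      _ = ∏ k : Fin d, ∑ i ∈ Finset.range N, x k.val ^ i :=
          (Finset.prod_univ_sum _ _).symm
      _ ≤ ∏ k : Fin d, (1 - x k.val)⁻¹ :=
          Finset.prod_le_prod
            (fun k _ => Finset.sum_nonneg fun i _ => pow_nonneg (hx0 _) _)
            (fun k _ => geom_partial_le (hx0 _) (hx1 _) N)
      _ ≤ ∏ k : Fin d, Real.exp (x k.val / (1 - x 0)) :=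
          Finset.prod_le_prod
            (fun k _ => inv_nonneg.2 (by linarith [hx1 k.val]))
            (fun k _ => inv_one_sub_le_exp (hx0 _) (hxb _) (hx1 0))
      _ = Real.exp (∑ k : Fin d, x k.val / (1 - x 0)) := (Real.exp_sum _ _).symm
      _ ≤ Real.exp M := by
          apply Real.exp_le_exp.2
          rw [← Finset.sum_div, hM]
          gcongr
          · linarith [hx1 0]
          · calc ∑ k : Fin d, x k.val = ∑ i ∈ Finset.range d, x i :=
                Fin.sum_univ_eq_sum_range x d
              _ ≤ ∑' k, ω k ^ τ := Summable.sum_le_tsum (Finset.range d) (fun i _ => hx0 i) hsum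
  have hEinv : E⁻¹ = ε ^ (-(2*τ)) := by
    rw [hEdef, show ε ^ 2 = ε ^ (2:ℕ) by norm_num, ← Real.rpow_natCast ε 2,
      ← Real.rpow_mul hε0.le, ← Real.rpow_neg hε0.le]
    norm_num
  rw [hcard, ← hEinv]
  rw [← le_div_iff₀ hE] at key
  rw [div_eq_mul_inv] at key
  exact key

lemma infoCount_ge (hpos : ∀ k, 0 < γsq k) (hanti : Antitone γsq) (d m : ℕ) (hm : m ≤ d)
    {ε : ℝ} (hε : ε ∈ Set.Ioo (0:ℝ) 1) (h : ∀ i, i < m → ε ^ 2 < omegaOf (γsq i)) :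
    m ≤ infoCount (gaussLam γsq) d ε := by
  have hfin := setA_finite hpos hanti d hε
  haveI : Finite ↥{j : Fin d → ℕ | ε ^ 2 < ∏ k : Fin d, gaussLam γsq k.val (j k)} :=
    hfin.to_subtype
  have hmem : ∀ i : Fin m,
      (fun t : Fin d => if (t : ℕ) = (i : ℕ) then 1 else 0) ∈
        {j : Fin d → ℕ | ε ^ 2 < ∏ k : Fin d, gaussLam γsq k.val (j k)} := by
    intro i
    have hik : (i : ℕ) < d := lt_of_lt_of_le i.2 hm
    set k₀ : Fin d := ⟨i, hik⟩ with hk₀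
    have : ∏ k : Fin d, gaussLam γsq k.val (if (k : ℕ) = (i : ℕ) then 1 else 0)
        = omegaOf (γsq i) := by
      rw [Finset.prod_eq_single k₀]
      · simp [gaussLam, hk₀]
      · intro b _ hb
        have : (b : ℕ) ≠ (i : ℕ) := by
          intro hbv; exact hb (Fin.ext (by rw [hbv, hk₀]))
        simp [gaussLam, this]
      · intro hk; exact absurd (Finset.mem_univ k₀) hk
    simpa [Set.mem_setOf_eq, this] using h i i.2
  set f : Fin m → ↥{j : Fin d → ℕ | ε ^ 2 < ∏ k : Fin d, gaussLam γsq k.val (j k)} :=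
    fun i => ⟨_, hmem i⟩ with hf
  have hinj : Function.Injective f := by
    intro a b hab
    have : ∀ t : Fin d, (if (t : ℕ) = (a : ℕ) then 1 else 0)
        = (if (t : ℕ) = (b : ℕ) then (1:ℕ) else 0) := fun t =>
      congrFun (congrArg Subtype.val hab) t
    have ha := this ⟨a, lt_of_lt_of_le a.2 hm⟩
    simp only [if_pos rfl] at ha
    by_cases hab' : (a : ℕ) = (b : ℕ)
    · exact Fin.ext hab'
    · rw [if_neg hab'] at ha; exact absurd ha one_ne_zero
  calc m = Nat.card (Fin m) := by simp
    _ ≤ _ := Nat.card_le_card_of_injective f hinj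

lemma adm_p_zero_false (hpos : ∀ k, 0 < γsq k) (hanti : Antitone γsq) (C : ℝ)
    (hadm : ∀ d : ℕ, 1 ≤ d → ∀ ε : ℝ, ε ∈ Set.Ioo (0:ℝ) 1 →
      (infoCount (gaussLam γsq) d ε : ℝ) ≤ C * ε ^ (-(0:ℝ))) : False := by
  set d : ℕ := ⌈C⌉₊ + 1 with hd
  set w : ℝ := omegaOf (γsq (d - 1)) with hw
  have hw0 : 0 < w := omegaOf_pos _ (hpos _)
  have hw1 : w < 1 := omegaOf_lt_one _ (hpos _).le
  set ε : ℝ := Real.sqrt (w / 2) with hεdef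
  have hε0 : 0 < ε := Real.sqrt_pos.2 (by linarith)
  have hε1 : ε < 1 := by
    rw [hεdef, show (1:ℝ) = Real.sqrt 1 from Real.sqrt_one.symm]
    exact Real.sqrt_lt_sqrt (by linarith) (by linarith)
  have hεsq : ε ^ 2 = w / 2 := Real.sq_sqrt (by linarith)
  have hcount : d ≤ infoCount (gaussLam γsq) d ε := by
    apply infoCount_ge hpos hanti d d le_rfl ⟨hε0, hε1⟩
    intro i hi
    have : w ≤ omegaOf (γsq i) :=
      omega_anti hpos hanti (by omega : i ≤ d - 1)
    rw [hεsq]; linarith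
  have := hadm d (by omega) ε ⟨hε0, hε1⟩
  rw [neg_zero, Real.rpow_zero, mul_one] at this
  have hdC : (d:ℝ) ≤ C := le_trans (Nat.cast_le.2 hcount) this
  have : (d:ℝ) ≤ (⌈C⌉₊ : ℝ) := hdC.trans (Nat.le_ceil C)
  rw [hd] at this
  push_cast at this
  linarith

lemma omega_bound (hpos : ∀ k, 0 < γsq k) (hanti : Antitone γsq) {C p : ℝ}
    (hC : 0 ≤ C) (hp : 0 < p)
    (hadm : ∀ d : ℕ, 1 ≤ d → ∀ ε : ℝ, ε ∈ Set.Ioo (0:ℝ) 1 →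
      (infoCount (gaussLam γsq) d ε : ℝ) ≤ C * ε ^ (-p))
    (k : ℕ) (hk : 2*(C+1) < (k:ℝ)+1) :
    omegaOf (γsq k) ≤ ((2*(C+1))/((k:ℝ)+1)) ^ ((2:ℝ)/p) := by
  set y : ℝ := (2*(C+1))/((k:ℝ)+1) with hy
  have hy0 : 0 < y := by positivity
  have hy1 : y < 1 := (div_lt_one (by positivity)).2 hk
  set ε : ℝ := y ^ ((1:ℝ)/p) with hε
  have hε0 : 0 < ε := Real.rpow_pos_of_pos hy0 _
  have hε1 : ε < 1 := Real.rpow_lt_one hy0.le hy1 (by positivity)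
  have hεsq : ε ^ 2 = y ^ ((2:ℝ)/p) := by
    rw [hε, show ε ^ 2 = ε ^ (2:ℕ) by norm_num, ← Real.rpow_natCast (y ^ ((1:ℝ)/p)) 2,
      ← Real.rpow_mul hy0.le]
    norm_num
    rw [show p⁻¹ * 2 = 2/p by field_simp]
  by_contra hcon
  push_neg at hcon
  rw [← hεsq] at hcon
  have hcount : k + 1 ≤ infoCount (gaussLam γsq) (k+1) ε := by
    apply infoCount_ge hpos hanti (k+1) (k+1) le_rfl ⟨hε0, hε1⟩
    intro i hi
    exact lt_of_lt_of_le hcon (omega_anti hpos hanti (by omega))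
  have hb := hadm (k+1) (by omega) ε ⟨hε0, hε1⟩
  have hεp : ε ^ (-p) = y⁻¹ := by
    rw [hε, ← Real.rpow_mul hy0.le, show (1:ℝ)/p * (-p) = -1 by field_simp,
      Real.rpow_neg_one]
  rw [hεp] at hb
  have hyinv : y⁻¹ = ((k:ℝ)+1)/(2*(C+1)) := by rw [hy, inv_div]
  rw [hyinv] at hb
  have hcast : ((k:ℝ)+1) ≤ (infoCount (gaussLam γsq) (k+1) ε : ℝ) := by
    have : ((k+1:ℕ):ℝ) ≤ (infoCount (gaussLam γsq) (k+1) ε : ℝ) :=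
      Nat.cast_le.2 hcount
    push_cast at this; linarith
  have hhalf : C * (((k:ℝ)+1)/(2*(C+1))) ≤ ((k:ℝ)+1)/2 := by
    rw [mul_div_assoc'] at *
    rw [div_le_div_iff₀ (by positivity : (0:ℝ) < 2*(C+1)) (by norm_num : (0:ℝ) < 2)]
    have hk1 : (0:ℝ) < (k:ℝ)+1 := by positivity
    nlinarith
  have : ((k:ℝ)+1) ≤ ((k:ℝ)+1)/2 := le_trans (hcast.trans hb) hhalf
  have hk1 : (0:ℝ) < (k:ℝ)+1 := by positivity
  linarith

lemma adm_summable (hpos : ∀ k, 0 < γsq k) (hanti : Antitone γsq) {C p : ℝ}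
    (hC : 0 ≤ C) (hp : 0 < p)
    (hadm : ∀ d : ℕ, 1 ≤ d → ∀ ε : ℝ, ε ∈ Set.Ioo (0:ℝ) 1 →
      (infoCount (gaussLam γsq) d ε : ℝ) ≤ C * ε ^ (-p))
    {τ : ℝ} (hτ : p/2 < τ) : Summable fun k => γsq k ^ τ := by
  have hτ0 : 0 < τ := lt_of_le_of_lt (by positivity) hτ
  set K : ℝ := 1 + 2 * γsq 0 with hK
  have hK0 : 0 < K := by have := hpos 0; positivity
  set A : ℝ := 2*(C+1) with hA
  have hA0 : 0 < A := by positivity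
  set q : ℝ := 2*τ/p with hq
  have hq1 : 1 < q := by
    rw [hq, lt_div_iff₀ hp]; linarith
  have hq0 : 0 < q := lt_trans one_pos hq1
  -- pointwise bound for large k
  have hbound : ∀ k : ℕ, A < (k:ℝ)+1 →
      γsq k ^ τ ≤ (K ^ τ * A ^ q) * (((k:ℝ)+1) ^ (-q)) := by
    intro k hk
    have hc0 : 0 < γsq k := hpos k
    have h1 : γsq k ≤ K * omegaOf (γsq k) := by
      have h2 := le_omegaOf (γsq k) hc0.le
      have h3 : γsq k ≤ (1 + 2*γsq k) * omegaOf (γsq k) := by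
        rw [div_le_iff₀ (by positivity : (0:ℝ) < 1 + 2*γsq k)] at h2
        linarith [h2]
      have h4 : (1 + 2*γsq k) * omegaOf (γsq k) ≤ K * omegaOf (γsq k) := by
        apply mul_le_mul_of_nonneg_right _ (omegaOf_nonneg _ hc0.le)
        have := hanti (Nat.zero_le k); rw [hK]; linarith
      linarith
    have h5 : omegaOf (γsq k) ≤ (A/((k:ℝ)+1)) ^ ((2:ℝ)/p) :=
      omega_bound hpos hanti hC hp hadm k hk
    have h6 : γsq k ≤ K * (A/((k:ℝ)+1)) ^ ((2:ℝ)/p) := by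
      calc γsq k ≤ K * omegaOf (γsq k) := h1
        _ ≤ K * (A/((k:ℝ)+1)) ^ ((2:ℝ)/p) := by
            exact mul_le_mul_of_nonneg_left h5 hK0.le
    calc γsq k ^ τ ≤ (K * (A/((k:ℝ)+1)) ^ ((2:ℝ)/p)) ^ τ :=
          Real.rpow_le_rpow hc0.le h6 hτ0.le
      _ = K ^ τ * ((A/((k:ℝ)+1)) ^ ((2:ℝ)/p)) ^ τ :=
          Real.mul_rpow hK0.le (Real.rpow_nonneg (by positivity) _)
      _ = K ^ τ * (A/((k:ℝ)+1)) ^ q := by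
          rw [← Real.rpow_mul (by positivity : (0:ℝ) ≤ A/((k:ℝ)+1))]
          congr 1
          rw [hq]; field_simp
      _ = (K ^ τ * A ^ q) * (((k:ℝ)+1) ^ (-q)) := by
          rw [Real.div_rpow hA0.le (by positivity : (0:ℝ) ≤ (k:ℝ)+1),
            Real.rpow_neg (by positivity : (0:ℝ) ≤ (k:ℝ)+1)]
          ring
  -- summability of the comparison series
  have hsumq : Summable fun n : ℕ => ((n:ℝ)+1) ^ (-q) := by
    have h := (Real.summable_nat_rpow (p := -q)).2 (by linarith : -q < -1)
    have := (summable_nat_add_iff 1).2 h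
    convert this using 2 with n
    · rfl
    push_cast
    ring

  set K₀ : ℕ := ⌈A⌉₊ + 1 with hK₀
  have hK₀A : ∀ n : ℕ, A < ((n + K₀ : ℕ):ℝ) + 1 := by
    intro n
    have h1 : A ≤ (⌈A⌉₊ : ℝ) := Nat.le_ceil A
    have h2 : (⌈A⌉₊ : ℝ) < ((n + K₀ : ℕ):ℝ) + 1 := by
      rw [hK₀]; push_cast; linarith [Nat.cast_nonneg (α := ℝ) n]
    linarith
  rw [← summable_nat_add_iff K₀]
  apply Summable.of_nonneg_of_le
    (fun n => Real.rpow_nonneg (hpos _).le τ)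
    (fun n => ?_) (hsumq.mul_left (K ^ τ * A ^ q))
  calc γsq (n + K₀) ^ τ ≤ (K ^ τ * A ^ q) * ((((n+K₀:ℕ)):ℝ)+1) ^ (-q) :=
        hbound (n+K₀) (hK₀A n)
    _ ≤ (K ^ τ * A ^ q) * (((n:ℝ)+1) ^ (-q)) := by
        apply mul_le_mul_of_nonneg_left _ (by positivity)
        apply Real.rpow_le_rpow_of_nonpos (by positivity) _ (by linarith)
        push_cast
        linarith [Nat.cast_nonneg (α := ℝ) ⌈A⌉₊]

lemma summable_shift_rpow {q : ℝ} (hq : 1 < q) :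
    Summable fun n : ℕ => ((n:ℝ)+1) ^ (-q) := by
  have h := (Real.summable_nat_rpow (p := -q)).2 (by linarith : -q < -1)
  have := (summable_nat_add_iff 1).2 h
  convert this using 2 with n
  · rfl
  push_cast
  ring

lemma liminf_ge_of_summable {γsq : ℕ → ℝ} (hpos : ∀ k, 0 < γsq k) (hanti : Antitone γsq) {τ : ℝ}
    (hτ : 0 < τ) (hsum : Summable fun k => γsq k ^ τ) :
    ((1/τ : ℝ) : EReal) ≤ Filter.liminf
      (fun k : ℕ => ((Real.log (γsq k)⁻¹ / Real.log ((k:ℝ)+1) : ℝ) : EReal)) Filter.atTop := by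
  set M : ℝ := ∑' k, γsq k ^ τ with hMdef
  have hterm : ∀ k, 0 < γsq k ^ τ := fun k => Real.rpow_pos_of_pos (hpos k) τ
  have hM0 : 0 < M :=
    lt_of_lt_of_le (hterm 0) (Summable.le_tsum hsum 0 (fun j _ => (hterm j).le))
  have hck : ∀ k : ℕ, γsq k ≤ (M/((k:ℝ)+1)) ^ (1/τ) := by
    intro k
    have h1 : ∑ i ∈ Finset.range (k+1), γsq i ^ τ ≤ M :=
      Summable.sum_le_tsum _ (fun i _ => (hterm i).le) hsum
    have h2 : ((k:ℝ)+1) * γsq k ^ τ ≤ ∑ i ∈ Finset.range (k+1), γsq i ^ τ := by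
      have h3 : ∀ i ∈ Finset.range (k+1), γsq k ^ τ ≤ γsq i ^ τ := fun i hi =>
        Real.rpow_le_rpow (hpos k).le (hanti (by
          simpa using Nat.lt_succ_iff.1 (Finset.mem_range.1 hi))) hτ.le
      have := Finset.card_nsmul_le_sum (Finset.range (k+1)) _ _ h3
      rw [Finset.card_range, nsmul_eq_mul] at this
      push_cast at this
      linarith
    have h4 : γsq k ^ τ ≤ M / ((k:ℝ)+1) := by
      rw [le_div_iff₀ (by positivity : (0:ℝ) < (k:ℝ)+1)]
      linarith
    calc γsq k = (γsq k ^ τ) ^ (1/τ) := by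
          rw [← Real.rpow_mul (hpos k).le, mul_one_div, div_self hτ.ne', Real.rpow_one]
      _ ≤ (M/((k:ℝ)+1)) ^ (1/τ) := Real.rpow_le_rpow (hterm k).le h4 (by positivity)
  have hlog : ∀ k : ℕ, (Real.log ((k:ℝ)+1) - Real.log M) / τ ≤ Real.log (γsq k)⁻¹ := by
    intro k
    have hkpos : (0:ℝ) < (k:ℝ)+1 := by positivity
    have h1 : Real.log (γsq k) ≤ (1/τ) * Real.log (M/((k:ℝ)+1)) := by
      calc Real.log (γsq k) ≤ Real.log ((M/((k:ℝ)+1)) ^ (1/τ)) :=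
            Real.log_le_log (hpos k) (hck k)
        _ = (1/τ) * Real.log (M/((k:ℝ)+1)) := Real.log_rpow (by positivity) _
    rw [Real.log_inv]
    rw [Real.log_div hM0.ne' hkpos.ne', one_div, ← div_eq_inv_mul] at h1
    have h2 : Real.log (γsq k) * τ ≤ Real.log M - Real.log ((k:ℝ)+1) :=
      (le_div_iff₀ hτ).1 h1
    rw [div_le_iff₀ hτ]
    linarith
  set g : ℕ → ℝ := fun k => (1 - Real.log M / Real.log ((k:ℝ)+1)) / τ with hg
  have hLtop : Filter.Tendsto (fun k : ℕ => Real.log ((k:ℝ)+1)) Filter.atTop Filter.atTop :=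
    Real.tendsto_log_atTop.comp (Filter.tendsto_atTop_add_const_right _ 1
      tendsto_natCast_atTop_atTop)
  have hgt : Filter.Tendsto g Filter.atTop (nhds (1/τ)) := by
    have h0 : Filter.Tendsto (fun k : ℕ => Real.log M / Real.log ((k:ℝ)+1))
        Filter.atTop (nhds 0) := Filter.Tendsto.div_atTop tendsto_const_nhds hLtop
    have := (tendsto_const_nhds (x := (1:ℝ)) (f := Filter.atTop (α := ℕ))).sub h0
    have h2 := this.div_const τ
    simpa using h2
  have hratio : ∀ᶠ k : ℕ in Filter.atTop,
      g k ≤ Real.log (γsq k)⁻¹ / Real.log ((k:ℝ)+1) := by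
    filter_upwards [Filter.eventually_ge_atTop 1] with k hk
    have hL : 0 < Real.log ((k:ℝ)+1) := Real.log_pos (by
      have : (1:ℝ) ≤ (k:ℝ) := Nat.one_le_cast.2 hk
      linarith)
    have h1 := hlog k
    have h2 : g k * Real.log ((k:ℝ)+1)
        = (Real.log ((k:ℝ)+1) - Real.log M) / τ := by
      rw [hg]
      field_simp
    rw [le_div_iff₀ hL, h2]
    exact h1
  refine le_of_forall_lt fun c hc => ?_
  obtain ⟨s, hcs, hs⟩ := EReal.exists_between_coe_real hc
  refine lt_of_lt_of_le hcs (Filter.le_liminf_of_le (by isBoundedDefault) ?_)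
  have hsg : ∀ᶠ k in Filter.atTop, s < g k :=
    hgt.eventually (lt_mem_nhds (by exact_mod_cast hs))
  filter_upwards [hsg, hratio] with k h1 h2
  exact EReal.coe_le_coe_iff.2 (le_trans h1.le h2)

lemma summable_of_liminf_gt {γsq : ℕ → ℝ} (hpos : ∀ k, 0 < γsq k) {s : ℝ} (hs : 0 < s)
    (hlt : (s : EReal) < Filter.liminf
      (fun k : ℕ => ((Real.log (γsq k)⁻¹ / Real.log ((k:ℝ)+1) : ℝ) : EReal)) Filter.atTop)
    {τ : ℝ} (hτ : 0 < τ) (hsτ : 1 < s * τ) :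
    Summable fun k => γsq k ^ τ := by
  have hev : ∀ᶠ k : ℕ in Filter.atTop,
      (s : EReal) < ((Real.log (γsq k)⁻¹ / Real.log ((k:ℝ)+1) : ℝ) : EReal) :=
    Filter.eventually_lt_of_lt_liminf hlt
  have hbd : ∀ᶠ k : ℕ in Filter.atTop, γsq k ^ τ ≤ (((k:ℝ)+1)) ^ (-(s*τ)) := by
    filter_upwards [hev, Filter.eventually_ge_atTop 1] with k h1 hk
    have hL : 0 < Real.log ((k:ℝ)+1) := Real.log_pos (by
      have : (1:ℝ) ≤ (k:ℝ) := Nat.one_le_cast.2 hk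
      linarith)
    have h2 : s < Real.log (γsq k)⁻¹ / Real.log ((k:ℝ)+1) := EReal.coe_lt_coe_iff.1 h1
    have h3 : s * Real.log ((k:ℝ)+1) < Real.log (γsq k)⁻¹ := by
      rw [lt_div_iff₀ hL] at h2
      linarith
    have h4 : γsq k < ((k:ℝ)+1) ^ (-s) := by
      have h5 : Real.log (γsq k) < Real.log (((k:ℝ)+1) ^ (-s)) := by
        rw [Real.log_rpow (by positivity), Real.log_inv] at *
        linarith
      calc γsq k = Real.exp (Real.log (γsq k)) := (Real.exp_log (hpos k)).symm
        _ < Real.exp (Real.log (((k:ℝ)+1) ^ (-s))) := Real.exp_lt_exp.2 h5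
        _ = ((k:ℝ)+1) ^ (-s) := Real.exp_log (Real.rpow_pos_of_pos (by positivity) _)
    calc γsq k ^ τ ≤ (((k:ℝ)+1) ^ (-s)) ^ τ :=
          Real.rpow_le_rpow (hpos k).le h4.le hτ.le
      _ = ((k:ℝ)+1) ^ (-(s*τ)) := by
          rw [← Real.rpow_mul (by positivity : (0:ℝ) ≤ (k:ℝ)+1)]
          ring_nf
  obtain ⟨K, hK⟩ := Filter.eventually_atTop.1 hbd
  rw [← summable_nat_add_iff K]
  apply Summable.of_nonneg_of_le (fun n => Real.rpow_nonneg (hpos _).le τ)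
    (fun n => ?_) (summable_shift_rpow hsτ)
  calc γsq (n + K) ^ τ ≤ (((n+K:ℕ):ℝ)+1) ^ (-(s*τ)) := hK (n+K) (by omega)
    _ ≤ (((n:ℝ)+1)) ^ (-(s*τ)) := by
        apply Real.rpow_le_rpow_of_nonpos (by positivity) _ (by linarith)
        push_cast
        linarith [Nat.cast_nonneg (α := ℝ) K]


/-- Gaussian kernels, normalized error criterion: SPT iff
`r(γ) = liminf ln(γ_k⁻²)/ln k > 0`, and in that case the exponent of SPT is `2/r(γ)`. -/
theorem gauss_spt (γsq : ℕ → ℝ) (hpos : ∀ k, 0 < γsq k) (hanti : Antitone γsq) :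
    (IsSPT (gaussLam γsq) ↔
      0 < Filter.liminf
        (fun k : ℕ => (Real.log (γsq k)⁻¹ / Real.log ((k : ℝ) + 1) : EReal))
        Filter.atTop) ∧
    (0 < Filter.liminf
        (fun k : ℕ => (Real.log (γsq k)⁻¹ / Real.log ((k : ℝ) + 1) : EReal))
        Filter.atTop →
      sptExponent (gaussLam γsq) =
        2 / (Filter.liminf
          (fun k : ℕ => (Real.log (γsq k)⁻¹ / Real.log ((k : ℝ) + 1) : EReal))
          Filter.atTop).toReal) := by
  set r : EReal := Filter.liminf
    (fun k : ℕ => (Real.log (γsq k)⁻¹ / Real.log ((k : ℝ) + 1) : EReal)) Filter.atTop with hr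
  have hreq : Filter.liminf
      (fun k : ℕ => ((Real.log (γsq k)⁻¹ / Real.log ((k : ℝ) + 1) : ℝ) : EReal))
      Filter.atTop = r := rfl
  -- helper 1 : summability gives admissibility with exponent 2τ
  have helper1 : ∀ τ : ℝ, 0 < τ → (Summable fun k => γsq k ^ τ) →
      ∃ C : ℝ, 0 ≤ C ∧ ∀ d : ℕ, 1 ≤ d → ∀ ε : ℝ, ε ∈ Set.Ioo (0:ℝ) 1 →
        (infoCount (gaussLam γsq) d ε : ℝ) ≤ C * ε ^ (-(2*τ)) := by
    intro τ hτ hsum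
    have hsumω : Summable fun k => omegaOf (γsq k) ^ τ :=
      Summable.of_nonneg_of_le (fun k => Real.rpow_nonneg (omegaOf_nonneg _ (hpos k).le) τ)
        (fun k => Real.rpow_le_rpow (omegaOf_nonneg _ (hpos k).le)
          (omegaOf_le_self _ (hpos k).le) hτ.le) hsum
    exact ⟨Real.exp ((∑' k, omegaOf (γsq k) ^ τ) / (1 - omegaOf (γsq 0) ^ τ)),
      (Real.exp_pos _).le,
      fun d _ ε hε => infoCount_le hpos hanti hτ hsumω d hε⟩
  -- helper 2 : admissibility gives summability
  have helper2 : ∀ C p : ℝ, 0 ≤ C → 0 ≤ p →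
      (∀ d : ℕ, 1 ≤ d → ∀ ε : ℝ, ε ∈ Set.Ioo (0:ℝ) 1 →
        (infoCount (gaussLam γsq) d ε : ℝ) ≤ C * ε ^ (-p)) →
      ∀ τ : ℝ, p/2 < τ → Summable fun k => γsq k ^ τ := by
    intro C p hC hp hadm τ hτ
    rcases eq_or_lt_of_le hp with hp0 | hp0
    · exact absurd (by rw [← hp0] at hadm; exact hadm) (fun h =>
        adm_p_zero_false hpos hanti C h)
    · exact adm_summable hpos hanti hC hp0 hadm hτ
  have hiff : (∃ C p : ℝ, 0 ≤ C ∧ 0 ≤ p ∧ ∀ d : ℕ, 1 ≤ d → ∀ ε : ℝ,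
      ε ∈ Set.Ioo (0 : ℝ) 1 → (infoCount (gaussLam γsq) d ε : ℝ) ≤ C * ε ^ (-p)) ↔
      0 < r := by
    constructor
    · rintro ⟨C, p, hC, hp, hadm⟩
      set τ : ℝ := max p 1 with hτdef
      have hττ : p/2 < τ := by
        rcases le_total p 1 with h | h
        · calc p/2 ≤ 1/2 := by linarith
            _ < 1 := by norm_num
            _ ≤ τ := le_max_right _ _
        · calc p/2 < p := by linarith
            _ ≤ τ := le_max_left _ _
      have hτ0 : 0 < τ := lt_of_lt_of_le one_pos (le_max_right _ _)
      have hsum := helper2 C p hC hp hadm τ hττ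
      have hge := liminf_ge_of_summable hpos hanti hτ0 hsum
      calc (0:EReal) < ((1/τ : ℝ) : EReal) := EReal.coe_pos.2 (by positivity)
        _ ≤ r := by rw [← hreq]; exact hge
    · intro hr0
      obtain ⟨s, hs0, hsr⟩ : ∃ s : ℝ, 0 < s ∧ (s : EReal) < r := by
        by_cases hrt : r = ⊤
        · refine ⟨1, one_pos, ?_⟩
          rw [hrt]; exact EReal.coe_lt_top 1
        · have hbot : r ≠ ⊥ := fun h => by rw [h] at hr0; exact absurd hr0 (by simp)
          have hρ : ((r.toReal : ℝ) : EReal) = r := EReal.coe_toReal hrt hbot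
          have hρ0 : 0 < r.toReal := by
            have h' := hr0; rw [← hρ] at h'; exact EReal.coe_pos.1 h'
          refine ⟨r.toReal/2, by linarith, ?_⟩
          conv_rhs => rw [← hρ]
          exact EReal.coe_lt_coe_iff.2 (by linarith)
      have hsum : Summable fun k => γsq k ^ (2/s) :=
        summable_of_liminf_gt hpos hs0 (by rw [hreq]; exact hsr) (by positivity)
          (by rw [mul_div_cancel₀ _ hs0.ne']; norm_num)
      obtain ⟨C, hC, hadm⟩ := helper1 (2/s) (by positivity) hsum
      exact ⟨C, 2*(2/s), hC, by positivity, hadm⟩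
  refine ⟨hiff, ?_⟩
  intro hr0
  unfold sptExponent
  set S : Set ℝ := {p : ℝ | 0 ≤ p ∧ ∃ C : ℝ, 0 ≤ C ∧ ∀ d : ℕ, 1 ≤ d → ∀ ε : ℝ,
    ε ∈ Set.Ioo (0 : ℝ) 1 → (infoCount (gaussLam γsq) d ε : ℝ) ≤ C * ε ^ (-p)} with hS
  have hSbdd : BddBelow S := ⟨0, fun p hp => hp.1⟩
  have hmemS : ∀ τ : ℝ, 0 < τ → (Summable fun k => γsq k ^ τ) → (2*τ) ∈ S := by
    intro τ hτ hsum
    obtain ⟨C, hC, hadm⟩ := helper1 τ hτ hsum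
    exact ⟨by positivity, C, hC, hadm⟩
  have hlbS : ∀ p ∈ S, ∀ τ : ℝ, p/2 < τ → ((1/τ : ℝ) : EReal) ≤ r := by
    rintro p ⟨hp0, C, hC, hadm⟩ τ hτ
    have hτ0 : 0 < τ := lt_of_le_of_lt (by positivity) hτ
    rw [← hreq]
    exact liminf_ge_of_summable hpos hanti hτ0 (helper2 C p hC hp0 hadm τ hτ)
  by_cases hrt : r = ⊤
  · rw [hrt]
    rw [EReal.toReal_top, div_zero]
    have hmem : ∀ τ : ℝ, 0 < τ → (2*τ) ∈ S := by
      intro τ hτ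
      apply hmemS τ hτ
      apply summable_of_liminf_gt hpos (s := 2/τ) (by positivity)
        (by rw [hreq, hrt]; exact EReal.coe_lt_top _) hτ
      rw [div_mul_cancel₀ _ hτ.ne']
      norm_num
    have hne : S.Nonempty := ⟨2*1, hmem 1 one_pos⟩
    refine le_antisymm ?_ (le_csInf hne fun p hp => hp.1)
    by_contra hcon
    push_neg at hcon
    have h1 : sInf S ≤ 2*(sInf S/4) := csInf_le hSbdd (hmem _ (by linarith))
    linarith
  · have hbot : r ≠ ⊥ := fun h => by rw [h] at hr0; exact absurd hr0 (by simp)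
    have hρcoe : ((r.toReal : ℝ) : EReal) = r := EReal.coe_toReal hrt hbot
    set ρ : ℝ := r.toReal with hρdef
    have hρ0 : 0 < ρ := by
      have := hr0; rw [← hρcoe] at this; exact EReal.coe_pos.1 this
    have hmem : ∀ τ : ℝ, 1/ρ < τ → (2*τ) ∈ S := by
      intro τ hτ
      have hτ0 : 0 < τ := lt_trans (by positivity) hτ
      have hρτ : 1 < ρ * τ := by
        rw [div_lt_iff₀ hρ0] at hτ
        nlinarith
      set s : ℝ := (1/τ + ρ)/2 with hsdef
      have hs0 : 0 < s := by positivity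
      have h1τ : 1/τ < ρ := (div_lt_iff₀ hτ0).2 (by linarith [hρτ] : 1 < ρ * τ)
      have hsρ : s < ρ := by rw [hsdef]; linarith
      have hsτ : 1 < s * τ := by
        have h1 : (1/τ) * τ = 1 := by field_simp
        rw [hsdef]
        nlinarith
      apply hmemS τ hτ0
      exact summable_of_liminf_gt hpos hs0
        (by rw [hreq, ← hρcoe]; exact EReal.coe_lt_coe_iff.2 hsρ) hτ0 hsτ
    have hne : S.Nonempty := ⟨2*(2/ρ), hmem (2/ρ) (by
      rw [div_lt_div_iff₀ hρ0 hρ0]; nlinarith)⟩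
    refine le_antisymm ?_ (le_csInf hne ?_)
    · by_contra hcon
      push_neg at hcon
      set τ : ℝ := (1/ρ + sInf S/2)/2 with hτdef
      have h1 : 1/ρ < sInf S/2 := by
        have : 2*(1/ρ) = 2/ρ := by ring
        linarith [hcon]
      have hττ : 1/ρ < τ := by rw [hτdef]; linarith
      have h2 : sInf S ≤ 2*τ := csInf_le hSbdd (hmem τ hττ)
      rw [hτdef] at h2
      linarith
    · rintro p hpS
      have hp0 : 0 ≤ p := hpS.1
      have key : 1/ρ ≤ p/2 := by
        by_contra hcon
        push_neg at hcon
        set τ : ℝ := (p/2 + 1/ρ)/2 with hτdef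
        have hτ1 : p/2 < τ := by rw [hτdef]; linarith
        have hτ2 : τ < 1/ρ := by rw [hτdef]; linarith
        have hτ0 : 0 < τ := lt_of_le_of_lt (by positivity) hτ1
        have := hlbS p hpS τ hτ1
        rw [← hρcoe, EReal.coe_le_coe_iff] at this
        have : 1/ρ ≤ τ := by
          rw [div_le_iff₀ hρ0]
          rw [div_le_iff₀ hτ0] at this
          nlinarith
        linarith
      calc 2/ρ = 2*(1/ρ) := by ring
        _ ≤ 2*(p/2) := by linarith
        _ = p := by ring
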